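/- If f is a geodesic Leech labeling of the cycle graph C_10 on 10 vertices, then f(e) ≤ 31 for every edge e of C_10. -/

import Mathlib

open SimpleGraph Finset

/-- A walk in `G` is a *geodesic walk* if it is a nontrivial path whose length equals
the distance in `G` between its endpoints. -/
def SimpleGraph.IsGeodesicWalk {V : Type*} (G : SimpleGraph V) {u v : V}
    (p : G.Walk u v) : Prop :=
  p.IsPath ∧ p.length = G.dist u v ∧ 0 < p.length

/-- The geodesic paths of `G`, where a path and its reverse are identified by
recording the (finite) set of edges of the path.  (A nontrivial path is determined,
up to reversal, by its edge set.) -/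
def SimpleGraph.geodesicPathSets {V : Type*} [DecidableEq V] (G : SimpleGraph V) :
    Set (Finset (Sym2 V)) :=
  {S | ∃ (u v : V) (p : G.Walk u v), G.IsGeodesicWalk p ∧ p.edges.toFinset = S}

/-- The geodesic path number `t_gp(G)`: the number of geodesic paths of `G`. -/
noncomputable def SimpleGraph.tgp {V : Type*} [DecidableEq V] (G : SimpleGraph V) : ℕ :=
  G.geodesicPathSets.ncard

/-- `f` is a geodesic Leech labeling of `G`: an edge labeling by positive integers such
that the weights of the geodesic paths of `G` are exactly `1, 2, …, t_gp(G)`,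
each occurring exactly once. -/
def SimpleGraph.IsGeodesicLeechLabeling {V : Type*} [DecidableEq V] (G : SimpleGraph V)
    (f : Sym2 V → ℕ) : Prop :=
  (∀ e ∈ G.edgeSet, 1 ≤ f e) ∧
    Set.BijOn (fun S => ∑ e ∈ S, f e) G.geodesicPathSets (Set.Icc 1 G.tgp)

open Fin.NatCast Fin.CommRing

def arcSet (i : Fin 10) (k : ℕ) : Finset (Sym2 (Fin 10)) :=
  (Finset.range k).image (fun j : ℕ => s(i + (j:Fin 10), i + (j:Fin 10) + 1))

lemma adj_iff {u v : Fin 10} : (cycleGraph 10).Adj u v ↔ (v = u + 1 ∨ u = v + 1) := by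
  rw [cycleGraph_adj']
  constructor
  · rintro (h | h)
    · right
      have h1 : u - v = 1 := Fin.ext (by simpa using h)
      rw [sub_eq_iff_eq_add] at h1; rw [h1]; ring
    · left
      have h1 : v - u = 1 := Fin.ext (by simpa using h)
      rw [sub_eq_iff_eq_add] at h1; rw [h1]; ring
  · rintro (h | h)
    · right; rw [h, add_sub_cancel_left]; rfl
    · left; rw [h, add_sub_cancel_left]; rfl

lemma map_shift_s (a d : Fin 10) (L : ℕ) :
    (List.range (L+1)).map (fun j : ℕ => a + (j:Fin 10) * d)
      = a :: (List.range L).map (fun j : ℕ => (a + d) + (j:Fin 10) * d) := by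
  rw [List.range_succ_eq_map, List.map_cons, List.map_map]
  congr 1
  · simp
  · apply List.map_congr_left
    intro j _
    simp only [Function.comp_apply, Nat.succ_eq_add_one]
    push_cast; ring

lemma map_shift_e (a d : Fin 10) (L : ℕ) :
    (List.range (L+1)).map (fun j : ℕ => s(a + (j:Fin 10) * d, a + (j:Fin 10) * d + d))
      = s(a, a + d) :: (List.range L).map
          (fun j : ℕ => s((a + d) + (j:Fin 10) * d, (a + d) + (j:Fin 10) * d + d)) := by
  rw [List.range_succ_eq_map, List.map_cons, List.map_map]
  congr 1
  · simp
  · apply List.map_congr_left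
    intro j _
    simp only [Function.comp_apply, Nat.succ_eq_add_one]
    push_cast
    congr 1 <;> ring

lemma walk_arc {u v : Fin 10} (p : (cycleGraph 10).Walk u v) : p.IsPath →
    ∃ d : Fin 10, (d = 1 ∨ d = -1) ∧ v = u + (p.length : Fin 10) * d ∧
      p.edges = (List.range p.length).map
        (fun j : ℕ => s(u + (j:Fin 10) * d, u + (j:Fin 10) * d + d)) ∧
      p.support = (List.range (p.length+1)).map (fun j : ℕ => u + (j:Fin 10) * d) := by
  induction p with
  | nil => exact fun _ => ⟨1, Or.inl rfl, by simp, by simp, by simp [List.range_succ]⟩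
  | @cons u w v h q ih =>
    intro hp
    rw [Walk.cons_isPath_iff] at hp
    obtain ⟨hq, hu⟩ := hp
    obtain ⟨d, hd, hv, he, hs⟩ := ih hq
    obtain ⟨d0, hd0, hw⟩ : ∃ d0 : Fin 10, (d0 = 1 ∨ d0 = -1) ∧ w = u + d0 := by
      rcases adj_iff.mp h with h1 | h1
      · exact ⟨1, Or.inl rfl, h1⟩
      · exact ⟨-1, Or.inr rfl, by rw [h1]; ring⟩
    subst hw
    have key : v = (u + d0) + (q.length : Fin 10) * d0 ∧
        q.edges = (List.range q.length).map
          (fun j : ℕ => s((u + d0) + (j:Fin 10) * d0, (u + d0) + (j:Fin 10) * d0 + d0)) ∧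
        q.support = (List.range (q.length+1)).map (fun j : ℕ => (u + d0) + (j:Fin 10) * d0) := by
      rcases Nat.eq_zero_or_pos q.length with h0 | h0
      · have hv0 : u + d0 = v := q.eq_of_length_eq_zero h0
        have hedges : q.edges = [] := List.eq_nil_of_length_eq_zero (by rw [q.length_edges, h0])
        have hsup : q.support = [u + d0] := by
          rw [hs, h0]; simp [List.range_succ]
        rw [h0, hedges, hsup]
        simp [← hv0, List.range_succ]
      · have hdd : d = d0 := by
          by_contra hne
          have hsum : d0 + d = 0 := by
            rcases hd with rfl | rfl <;> rcases hd0 with rfl | rfl <;>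
              first | exact absurd rfl hne | exact absurd rfl (fun hh => hne hh.symm) | ring
          apply hu
          have hmem : (u + d0) + (1:Fin 10) * d ∈ q.support := by
            rw [hs]
            refine List.mem_map.mpr ⟨1, ?_, by push_cast; ring⟩
            rw [List.mem_range]; omega
          have heq : (u + d0) + (1:Fin 10) * d = u := by
            rw [one_mul, add_assoc, hsum, add_zero]
          rwa [heq] at hmem
        subst hdd; exact ⟨hv, he, hs⟩
    obtain ⟨hv', he', hs'⟩ := key
    refine ⟨d0, hd0, ?_, ?_, ?_⟩
    · simp only [Walk.length_cons]
      calc v = u + d0 + (q.length : Fin 10) * d0 := hv'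
        _ = u + ((q.length + 1 : ℕ) : Fin 10) * d0 := by push_cast; ring
    · simp only [Walk.edges_cons, Walk.length_cons]
      rw [map_shift_e, he']
    · simp only [Walk.support_cons, Walk.length_cons]
      rw [map_shift_s, hs']

lemma map_shift1 (a : Fin 10) (L : ℕ) :
    (List.range (L+1)).map (fun j : ℕ => a + (j:Fin 10))
      = a :: (List.range L).map (fun j : ℕ => (a + 1) + (j:Fin 10)) := by
  rw [List.range_succ_eq_map, List.map_cons, List.map_map]
  congr 1
  · simp
  · apply List.map_congr_left
    intro j _
    simp only [Function.comp_apply, Nat.succ_eq_add_one]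
    push_cast; ring

lemma map_shift1e (a : Fin 10) (L : ℕ) :
    (List.range (L+1)).map (fun j : ℕ => s(a + (j:Fin 10), a + (j:Fin 10) + 1))
      = s(a, a + 1) :: (List.range L).map
          (fun j : ℕ => s((a + 1) + (j:Fin 10), (a + 1) + (j:Fin 10) + 1)) := by
  rw [List.range_succ_eq_map, List.map_cons, List.map_map]
  congr 1
  · simp
  · apply List.map_congr_left
    intro j _
    simp only [Function.comp_apply, Nat.succ_eq_add_one]
    push_cast
    congr 1 <;> ring

lemma walk_steps {u v : Fin 10} (p : (cycleGraph 10).Walk u v) :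
    ∃ P M : ℕ, P + M = p.length ∧ v = u + (P : Fin 10) - (M : Fin 10) := by
  induction p with
  | nil => exact ⟨0, 0, rfl, by simp⟩
  | @cons u w v h q ih =>
    obtain ⟨P, M, h1, h2⟩ := ih
    rcases adj_iff.mp h with hw | hw
    · refine ⟨P + 1, M, by rw [Walk.length_cons]; omega, ?_⟩
      rw [h2, hw]; push_cast; ring
    · refine ⟨P, M + 1, by rw [Walk.length_cons]; omega, ?_⟩
      rw [h2, show w = u - 1 by rw [hw]; ring]; push_cast; ring

lemma length_lower {u v : Fin 10} (p : (cycleGraph 10).Walk u v) (k : ℕ)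
    (hk : k ≤ 5) (hv : v = u + (k : Fin 10)) : k ≤ p.length := by
  by_contra hL
  push_neg at hL
  obtain ⟨P, M, hPM, hvu⟩ := walk_steps p
  rw [hv] at hvu
  have h1 : ((k : Fin 10)) = (P : Fin 10) - (M : Fin 10) := by
    have h2 := hvu
    rw [add_sub_assoc] at h2
    exact add_left_cancel h2
  have h3 := congrArg Fin.val h1
  simp only [Fin.sub_def, Fin.val_natCast] at h3
  omega

def arcWalk (u : Fin 10) : (k : ℕ) → (cycleGraph 10).Walk u (u + (k : Fin 10))
  | 0 => Walk.nil.copy rfl (by simp)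
  | (k+1) => (Walk.cons (show (cycleGraph 10).Adj u (u+1) by rw [adj_iff]; left; rfl)
      (arcWalk (u+1) k)).copy rfl (by push_cast; ring)

lemma arcWalk_length (u : Fin 10) (k : ℕ) : (arcWalk u k).length = k := by
  induction k generalizing u with
  | zero => simp [arcWalk]
  | succ k ih => simp [arcWalk, ih]

lemma arcWalk_support (u : Fin 10) (k : ℕ) :
    (arcWalk u k).support = (List.range (k+1)).map (fun j : ℕ => u + (j : Fin 10)) := by
  induction k generalizing u with
  | zero => simp [arcWalk, List.range_succ]
  | succ k ih =>
    rw [arcWalk]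
    simp only [Walk.support_copy, Walk.support_cons, ih]
    conv_rhs => rw [map_shift1]

lemma arcWalk_edges (u : Fin 10) (k : ℕ) :
    (arcWalk u k).edges = (List.range k).map
      (fun j : ℕ => s(u + (j : Fin 10), u + (j : Fin 10) + 1)) := by
  induction k generalizing u with
  | zero => simp [arcWalk]
  | succ k ih =>
    rw [arcWalk]
    simp only [Walk.edges_copy, Walk.edges_cons, ih]
    conv_rhs => rw [map_shift1e]

lemma arcWalk_isPath (u : Fin 10) (k : ℕ) (hk : k ≤ 9) : (arcWalk u k).IsPath := by
  rw [Walk.isPath_def, arcWalk_support]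
  refine List.Nodup.map_on ?_ List.nodup_range
  intro j hj j' hj' hEq
  rw [List.mem_range] at hj hj'
  have h2 : ((j : Fin 10)) = (j' : Fin 10) := by
    have := hEq
    exact add_left_cancel this
  have := congrArg Fin.val h2
  simp only [Fin.val_natCast] at this
  omega

lemma dist_le_arc (u : Fin 10) (k : ℕ) : (cycleGraph 10).dist u (u + (k : Fin 10)) ≤ k := by
  have := SimpleGraph.dist_le (arcWalk u k)
  rwa [arcWalk_length] at this

lemma dist_arc (u : Fin 10) (k : ℕ) (hk : k ≤ 5) :
    (cycleGraph 10).dist u (u + (k : Fin 10)) = k := by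
  refine le_antisymm (dist_le_arc u k) ?_
  have hconn : (cycleGraph 10).Connected := cycleGraph_connected (n := 9)
  obtain ⟨p, hp⟩ := hconn.exists_walk_length_eq_dist u (u + (k : Fin 10))
  rw [← hp]
  exact length_lower p k hk rfl

lemma dist_ub (u v : Fin 10) : (cycleGraph 10).dist u v ≤ 5 := by
  have hval : v = u + (((v - u).val : ℕ) : Fin 10) := by
    rw [Fin.cast_val_eq_self]; ring
  have hval' : u = v + (((u - v).val : ℕ) : Fin 10) := by
    rw [Fin.cast_val_eq_self]; ring
  rcases le_or_gt ((v - u).val) 5 with h | h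
  · calc (cycleGraph 10).dist u v = (cycleGraph 10).dist u (u + (((v - u).val : ℕ) : Fin 10)) := by rw [← hval]
      _ ≤ (v - u).val := dist_le_arc u _
      _ ≤ 5 := h
  · have hsum : (v - u) + (u - v) = 0 := by ring
    have := congrArg Fin.val hsum
    rw [Fin.add_def] at this
    simp only [Fin.val_zero] at this
    have h2 : (u - v).val ≤ 4 := by
      have hb : (v-u).val < 10 := (v-u).isLt
      have hb2 : (u-v).val < 10 := (u-v).isLt
      omega
    calc (cycleGraph 10).dist u v = (cycleGraph 10).dist v u := by rw [SimpleGraph.dist_comm]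
      _ = (cycleGraph 10).dist v (v + (((u - v).val : ℕ) : Fin 10)) := by rw [← hval']
      _ ≤ (u - v).val := dist_le_arc v _
      _ ≤ 5 := by omega

lemma toFinset_map' (f : ℕ → Sym2 (Fin 10)) (l : List ℕ) :
    (l.map f).toFinset = l.toFinset.image f := by
  induction l with
  | nil => simp
  | cons a l ih => simp [ih]

lemma toFinset_range' (n : ℕ) : (List.range n).toFinset = Finset.range n := by
  ext a; simp

lemma arc_mem_geo (i : Fin 10) (k : ℕ) (h1 : 1 ≤ k) (h5 : k ≤ 5) :
    arcSet i k ∈ (cycleGraph 10).geodesicPathSets := by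
  refine ⟨i, i + (k : Fin 10), arcWalk i k, ⟨arcWalk_isPath i k (by omega), ?_, ?_⟩, ?_⟩
  · rw [arcWalk_length, dist_arc i k h5]
  · rw [arcWalk_length]; omega
  · rw [arcWalk_edges, toFinset_map', toFinset_range']
    rfl

lemma geo_arc {S : Finset (Sym2 (Fin 10))} (hS : S ∈ (cycleGraph 10).geodesicPathSets) :
    ∃ i : Fin 10, ∃ k, 1 ≤ k ∧ k ≤ 5 ∧ S = arcSet i k := by
  obtain ⟨u, v, p, ⟨hp, hlen, hpos⟩, rfl⟩ := hS
  obtain ⟨d, hd, hv, he, -⟩ := walk_arc p hp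
  have hL5 : p.length ≤ 5 := by rw [hlen]; exact dist_ub u v
  rcases hd with rfl | rfl
  · refine ⟨u, p.length, hpos, hL5, ?_⟩
    rw [he, toFinset_map', toFinset_range']
    simp only [arcSet, mul_one]
  · refine ⟨u - (p.length : Fin 10), p.length, hpos, hL5, ?_⟩
    rw [he, toFinset_map', toFinset_range']
    rw [arcSet]
    set L := p.length with hLdef
    have key : ∀ j < L, s(u + (j:Fin 10) * (-1), u + (j:Fin 10) * (-1) + (-1))
        = s(u - (L:Fin 10) + ((L - 1 - j : ℕ) : Fin 10),
            u - (L:Fin 10) + ((L - 1 - j : ℕ) : Fin 10) + 1) := by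
      intro j hj
      have hc : ((L - 1 - j : ℕ) : Fin 10) = (L : Fin 10) - 1 - (j : Fin 10) := by
        have e1 : (L - 1 - j : ℕ) = L - (1 + j) := by omega
        rw [e1, Nat.cast_sub (by omega)]
        push_cast; ring
      rw [hc, Sym2.eq_swap]
      congr 1 <;> ring
    have hrev : (Finset.range L).image (fun j : ℕ => L - 1 - j) = Finset.range L := by
      ext a
      simp only [Finset.mem_image, Finset.mem_range]
      constructor
      · rintro ⟨j, hj, rfl⟩; omega
      · intro ha; exact ⟨L - 1 - a, by omega, by omega⟩
    conv_rhs => rw [← hrev, Finset.image_image]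
    apply Finset.image_congr
    intro j hj
    rw [Finset.mem_coe, Finset.mem_range] at hj
    exact key j hj

def P10 : Finset (Fin 10 × ℕ) := (univ : Finset (Fin 10)) ×ˢ Finset.Icc 1 5

lemma arc_inj : ∀ i i' : Fin 10, ∀ k ∈ Finset.Icc 1 5, ∀ k' ∈ Finset.Icc 1 5,
    (arcSet i k ⊆ arcSet i' k' ∧ arcSet i' k' ⊆ arcSet i k) → i = i' ∧ k = k' := by decide

lemma s_inj : ∀ i : Fin 10, ∀ j : ℕ, j < 5 → ∀ j' : ℕ, j' < 5 →
    s(i + (j:Fin 10), i + (j:Fin 10) + 1) = s(i + (j':Fin 10), i + (j':Fin 10) + 1) →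
      j = j' := by decide

lemma cardB : ∀ m : Fin 10,
    (P10.filter (fun q => q.2 ≤ 4 ∧ ∀ j ∈ Finset.range q.2, q.1 + (j:Fin 10) ≠ m)).card
      = 30 := by decide

lemma sum1275 : ∑ v ∈ Finset.Icc 1 50, v = 1275 := by decide

lemma sum15 : ∑ k ∈ Finset.Icc 1 5, k = 15 := by decide

def wsum (g : Fin 10 → ℕ) (q : Fin 10 × ℕ) : ℕ := ∑ j ∈ Finset.range q.2, g (q.1 + (j:Fin 10))

lemma sum_shift (g : Fin 10 → ℕ) (j : ℕ) : ∑ i : Fin 10, g (i + (j : Fin 10)) = ∑ m, g m :=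
  Fintype.sum_equiv (Equiv.addRight (j : Fin 10)) _ _ (fun _ => rfl)

lemma sum_P (g : Fin 10 → ℕ) : ∑ q ∈ P10, wsum g q = 15 * ∑ m, g m := by
  rw [P10, Finset.sum_product]
  have : ∀ i : Fin 10, ∑ k ∈ Finset.Icc 1 5, wsum g (i, k)
      = ∑ k ∈ Finset.Icc 1 5, ∑ j ∈ Finset.range k, g (i + (j:Fin 10)) := by
    intro i; rfl
  simp only [this]
  rw [Finset.sum_comm]
  have h2 : ∀ k, ∑ i : Fin 10, ∑ j ∈ Finset.range k, g (i + (j:Fin 10))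
      = k * ∑ m, g m := by
    intro k
    rw [Finset.sum_comm]
    have : ∀ j ∈ Finset.range k, ∑ i : Fin 10, g (i + (j:Fin 10)) = ∑ m, g m :=
      fun j _ => sum_shift g j
    rw [Finset.sum_congr rfl this, Finset.sum_const, Finset.card_range, smul_eq_mul]
  rw [Finset.sum_congr rfl (fun k _ => h2 k), ← Finset.sum_mul, sum15]

lemma sum_ten (g : Fin 10 → ℕ) (i : Fin 10) :
    ∑ j ∈ Finset.range 10, g (i + (j:Fin 10)) = ∑ m, g m := by
  rw [← Fin.sum_univ_eq_sum_range (fun j : ℕ => g (i + (j:Fin 10))) 10]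
  simp only [Fin.cast_val_eq_self]
  exact Fintype.sum_equiv (Equiv.addLeft i) _ _ (fun x => by simp [Equiv.addLeft])

lemma antipodal (g : Fin 10 → ℕ) (i : Fin 10) :
    wsum g (i, 5) + wsum g (i + 5, 5) = ∑ m, g m := by
  have hsplit := Finset.sum_range_add (fun j : ℕ => g (i + (j:Fin 10))) 5 5
  norm_num at hsplit
  rw [← sum_ten g i, hsplit]
  congr 1
  apply Finset.sum_congr rfl
  intro j _
  congr 1
  push_cast
  ring

theorem main_aux (g : Fin 10 → ℕ)
    (hmaps : ∀ q ∈ P10, wsum g q ∈ Finset.Icc 1 50)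
    (hinj : ∀ q ∈ P10, ∀ q' ∈ P10, wsum g q = wsum g q' → q = q')
    (hsurj : ∀ v ∈ Finset.Icc 1 50, ∃ q ∈ P10, wsum g q = v) :
    ∀ m, g m ≤ 31 := by
  have hsumall : ∑ q ∈ P10, wsum g q = 1275 := by
    have hb := Finset.sum_bij (i := fun q (_ : q ∈ P10) => wsum g q) (g := fun v => v)
      hmaps hinj
      (fun b hb => by obtain ⟨q, hq, hw⟩ := hsurj b hb; exact ⟨q, hq, hw⟩)
      (fun a ha => rfl)
    rw [hb]
    exact sum1275
  have hg85 : ∑ m, g m = 85 := by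
    have := sum_P g
    omega
  have w5ge : ∀ i : Fin 10, 35 ≤ wsum g (i, 5) := by
    intro i
    have h1 := antipodal g i
    have h2 := hmaps (i + 5, 5) (by simp [P10])
    rw [Finset.mem_Icc] at h2
    omega
  intro m
  by_contra hm
  push_neg at hm
  -- hm : 31 < g m
  set B := P10.filter (fun q => q.2 ≤ 4 ∧ ∀ j ∈ Finset.range q.2, q.1 + (j:Fin 10) ≠ m) with hBdef
  have hsub : Finset.Icc 1 31 ⊆ B.image (wsum g) := by
    intro v hv
    rw [Finset.mem_Icc] at hv
    obtain ⟨q, hq, hwq⟩ := hsurj v (by rw [Finset.mem_Icc]; omega)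
    refine Finset.mem_image.mpr ⟨q, ?_, hwq⟩
    rw [hBdef, Finset.mem_filter]
    refine ⟨hq, ?_, ?_⟩
    · -- q.2 ≤ 4
      by_contra h4
      push_neg at h4
      have hq5 : q.2 = 5 := by
        have := hq
        rw [P10, Finset.mem_product, Finset.mem_Icc] at this
        omega
      have : q = (q.1, 5) := by rw [← hq5]
      rw [this] at hwq
      have := w5ge q.1
      omega
    · intro j hj hmj
      rw [Finset.mem_range] at hj
      have hle : g m ≤ wsum g q := by
        rw [← hmj]
        exact Finset.single_le_sum (f := fun j : ℕ => g (q.1 + (j:Fin 10)))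
          (fun _ _ => Nat.zero_le _) (Finset.mem_range.mpr hj)
      omega
  have hcard : 31 ≤ 30 := by
    calc 31 = (Finset.Icc 1 31).card := by rw [Nat.card_Icc]
      _ ≤ (B.image (wsum g)).card := Finset.card_le_card hsub
      _ ≤ B.card := Finset.card_image_le
      _ = 30 := cardB m
  omega

def G50 : Finset (Finset (Sym2 (Fin 10))) := P10.image (fun q => arcSet q.1 q.2)

lemma arc_injOn : ∀ q ∈ P10, ∀ q' ∈ P10, arcSet q.1 q.2 = arcSet q'.1 q'.2 → q = q' := by
  rintro ⟨i, k⟩ hq ⟨i', k'⟩ hq' h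
  rw [P10, Finset.mem_product] at hq hq'
  have := arc_inj i i' k hq.2 k' hq'.2 ⟨by rw [h], by rw [h]⟩
  simp only [Prod.mk.injEq]
  exact this

lemma mem_P10_iff {q : Fin 10 × ℕ} : q ∈ P10 ↔ 1 ≤ q.2 ∧ q.2 ≤ 5 := by
  rw [P10, Finset.mem_product, Finset.mem_Icc]
  simp

lemma geo_eq : (cycleGraph 10).geodesicPathSets = ↑G50 := by
  ext S
  constructor
  · intro hS
    obtain ⟨i, k, h1, h5, rfl⟩ := geo_arc hS
    exact Finset.mem_coe.mpr (Finset.mem_image.mpr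
      ⟨(i, k), mem_P10_iff.mpr ⟨h1, h5⟩, rfl⟩)
  · intro hS
    obtain ⟨⟨i, k⟩, hq, rfl⟩ := Finset.mem_image.mp (Finset.mem_coe.mp hS)
    rw [mem_P10_iff] at hq
    exact arc_mem_geo i k hq.1 hq.2

lemma G50card : G50.card = 50 := by
  rw [G50, Finset.card_image_of_injOn
    (fun q hq q' hq' h => arc_injOn q (Finset.mem_coe.mp hq) q' (Finset.mem_coe.mp hq') h)]
  rw [P10, Finset.card_product, Nat.card_Icc]
  simp

lemma tgp50 : (cycleGraph 10).tgp = 50 := by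
  rw [SimpleGraph.tgp, geo_eq, Set.ncard_coe_finset, G50card]

lemma arc_sum (f : Sym2 (Fin 10) → ℕ) (i : Fin 10) {k : ℕ} (hk : k ≤ 5) :
    ∑ e ∈ arcSet i k, f e = wsum (fun m => f s(m, m + 1)) (i, k) := by
  rw [arcSet, Finset.sum_image]
  · rfl
  · intro j hj j' hj' h
    rw [Finset.mem_coe, Finset.mem_range] at hj hj'
    apply s_inj i j (Nat.lt_of_lt_of_le hj hk) j' (Nat.lt_of_lt_of_le hj' hk)
    exact_mod_cast h

/-- If `f` is a geodesic Leech labeling of the cycle on `10` vertices, then `f e ≤ 31`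
for every edge `e` of the cycle. -/
theorem statement_9 (f : Sym2 (Fin 10) → ℕ)
    (hf : (SimpleGraph.cycleGraph 10).IsGeodesicLeechLabeling f) :
    ∀ e ∈ (SimpleGraph.cycleGraph 10).edgeSet, f e ≤ 31 := by
  obtain ⟨-, hbij⟩ := hf
  rw [tgp50, geo_eq] at hbij
  set g : Fin 10 → ℕ := fun m => f s(m, m + 1) with hg
  have hmemG : ∀ q ∈ P10, arcSet q.1 q.2 ∈ (↑G50 : Set (Finset (Sym2 (Fin 10)))) :=
    fun q hq => Finset.mem_coe.mpr (Finset.mem_image.mpr ⟨q, hq, rfl⟩)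
  have hmaps : ∀ q ∈ P10, wsum g q ∈ Finset.Icc 1 50 := by
    intro q hq
    have h1 := hbij.mapsTo (hmemG q hq)
    rw [Set.mem_Icc] at h1
    rw [Finset.mem_Icc]
    rwa [arc_sum f q.1 (mem_P10_iff.mp hq).2] at h1
  have hinj : ∀ q ∈ P10, ∀ q' ∈ P10, wsum g q = wsum g q' → q = q' := by
    intro q hq q' hq' h
    apply arc_injOn q hq q' hq'
    apply hbij.injOn (hmemG q hq) (hmemG q' hq')
    simp only
    rw [arc_sum f q.1 (mem_P10_iff.mp hq).2, arc_sum f q'.1 (mem_P10_iff.mp hq').2]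
    exact h
  have hsurj : ∀ v ∈ Finset.Icc 1 50, ∃ q ∈ P10, wsum g q = v := by
    intro v hv
    rw [Finset.mem_Icc] at hv
    obtain ⟨S, hS, hSv⟩ := hbij.surjOn (Set.mem_Icc.mpr hv)
    obtain ⟨q, hq, rfl⟩ := Finset.mem_image.mp (Finset.mem_coe.mp hS)
    refine ⟨q, hq, ?_⟩
    rw [← arc_sum f q.1 (mem_P10_iff.mp hq).2]
    exact hSv
  have hbound := main_aux g hmaps hinj hsurj
  intro e
  induction e using Sym2.ind with
  | _ u v =>
    intro he
    rw [SimpleGraph.mem_edgeSet] at he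
    rcases adj_iff.mp he with h | h
    · rw [h]
      exact hbound u
    · rw [Sym2.eq_swap, h]
      exact hbound v
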